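/- Fix $n \in \mathbb{Z}$ nonzero such that $\Delta_n(t) = nt^2-(2n+1)t+n$ is irreducible over $\mathbb{Q}$. Let $a = \frac{(2n+1)+\sqrt{4n+1}}{2}$ and $\xi = \frac{1+\sqrt{4n+1}}{2}$. Then the ring homomorphism $f\colon \mathbb{Z}[t,t^{-1}] \to \mathbb{Z}[1/n, \xi]$ determined by $t \mapsto a/n$ is well-defined, surjective, and has kernel exactly the ideal $(\Delta_n)$. In particular, $f$ induces a ring isomorphism $\mathbb{Z}[t,t^{-1}]/(\Delta_n) \cong \mathbb{Z}[1/n,\xi]$. -/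

import Mathlib

open LaurentPolynomial in
/-- `Δₙ = n t² - (2n+1) t + n` as a Laurent polynomial over `ℤ`. -/
noncomputable def DeltaL (n : ℤ) : LaurentPolynomial ℤ :=
  LaurentPolynomial.C n * T 2 - LaurentPolynomial.C (2 * n + 1) * T 1 + LaurentPolynomial.C n

/-- `Δₙ` as a polynomial over `ℚ` (for the irreducibility hypothesis). -/
noncomputable def DeltaQ (n : ℤ) : Polynomial ℚ :=
  Polynomial.C (n : ℚ) * Polynomial.X ^ 2 - Polynomial.C ((2 * n + 1 : ℤ) : ℚ) * Polynomial.X +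
    Polynomial.C (n : ℚ)

/-- The quadratic field `K = ℚ(√(4n+1))`, realized as `ℚ[X]/(X² - (4n+1))`. -/
abbrev K5 (n : ℤ) := AdjoinRoot ((Polynomial.X : Polynomial ℚ) ^ 2 - Polynomial.C ((4 * n + 1 : ℤ) : ℚ))

/-- The square root `s = √(4n+1)` in `K`. -/
noncomputable abbrev s5 (n : ℤ) : K5 n := AdjoinRoot.root _

/-- `ξ = (1 + √(4n+1))/2`. -/
noncomputable abbrev xi5 (n : ℤ) : K5 n := algebraMap ℚ (K5 n) (1 / 2) * (1 + s5 n)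

/-- `a = ((2n+1) + √(4n+1))/2`. -/
noncomputable abbrev a5 (n : ℤ) : K5 n :=
  algebraMap ℚ (K5 n) (1 / 2) * (algebraMap ℚ (K5 n) ((2 * n + 1 : ℤ) : ℚ) + s5 n)

/-- The subring `ℤ[1/n, ξ]` of `K`. -/
noncomputable abbrev R5 (n : ℤ) : Subring (K5 n) :=
  Subring.closure {algebraMap ℚ (K5 n) ((n : ℚ)⁻¹), xi5 n}

namespace Stmt5Aux

open Polynomial

noncomputable def DeltaZ (n : ℤ) : Polynomial ℤ :=
  Polynomial.C n * Polynomial.X ^ 2 - Polynomial.C (2 * n + 1) * Polynomial.X + Polynomial.C n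

variable (n : ℤ)

noncomputable def uK : K5 n := algebraMap ℚ (K5 n) ((n : ℚ)⁻¹) * a5 n

noncomputable def vK : K5 n :=
  algebraMap ℚ (K5 n) ((n : ℚ)⁻¹) *
    (algebraMap ℚ (K5 n) (1 / 2) * (algebraMap ℚ (K5 n) ((2 * n + 1 : ℤ) : ℚ) - s5 n))

lemma hs : s5 n ^ 2 = 4 * algebraMap ℚ (K5 n) (n : ℚ) + 1 := by
  have h := AdjoinRoot.eval₂_root ((Polynomial.X : Polynomial ℚ) ^ 2 - Polynomial.C ((4 * n + 1 : ℤ) : ℚ))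
  simp only [eval₂_sub, eval₂_pow, eval₂_X, eval₂_C, sub_eq_zero] at h
  rw [h, ← AdjoinRoot.algebraMap_eq]
  rw [congrArg (algebraMap ℚ (K5 n)) (show ((4 * n + 1 : ℤ) : ℚ) = 4 * (n : ℚ) + 1 by push_cast; ring),
    map_add, map_mul, map_one, map_ofNat]

lemma hb : algebraMap ℚ (K5 n) ((2 * n + 1 : ℤ) : ℚ) = 2 * algebraMap ℚ (K5 n) (n : ℚ) + 1 := by
  rw [show ((2 * n + 1 : ℤ) : ℚ) = 2 * (n : ℚ) + 1 by push_cast; ring,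
    map_add, map_mul, map_one, map_ofNat]

variable {n}

lemma hx (hn : n ≠ 0) :
    algebraMap ℚ (K5 n) ((n : ℚ)⁻¹) * algebraMap ℚ (K5 n) (n : ℚ) = 1 := by
  rw [← map_mul, inv_mul_cancel₀ (by exact_mod_cast hn), map_one]

variable (n) in
lemma hy : 2 * algebraMap ℚ (K5 n) (1 / 2) = 1 := by
  rw [show (2 : K5 n) = algebraMap ℚ (K5 n) 2 from (map_ofNat _ 2).symm, ← map_mul]
  norm_num

lemma L1 (hn : n ≠ 0) : uK n * vK n = 1 := by
  set x := algebraMap ℚ (K5 n) ((n : ℚ)⁻¹) with hxdef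
  set y := algebraMap ℚ (K5 n) (1 / 2) with hydef
  set z := algebraMap ℚ (K5 n) (n : ℚ) with hzdef
  set s := s5 n with hsdef
  simp only [uK, vK, a5, hb n]
  linear_combination (-(x ^ 2 * y ^ 2)) * hs n + ((x * z + 1) * (2 * y) ^ 2) * hx hn +
    (2 * y + 1) * hy n

lemma L2 (hn : n ≠ 0) : algebraMap ℚ (K5 n) (n : ℚ) * (uK n + vK n) =
    2 * algebraMap ℚ (K5 n) (n : ℚ) + 1 := by
  set x := algebraMap ℚ (K5 n) ((n : ℚ)⁻¹)
  set y := algebraMap ℚ (K5 n) (1 / 2)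
  set z := algebraMap ℚ (K5 n) (n : ℚ)
  simp only [uK, vK, a5, hb n]
  linear_combination ((2 * z + 1) * 2 * y) * hx hn + (2 * z + 1) * hy n

lemma L3 (hn : n ≠ 0) : uK n = xi5 n * algebraMap ℚ (K5 n) ((n : ℚ)⁻¹) + 1 := by
  set x := algebraMap ℚ (K5 n) ((n : ℚ)⁻¹)
  set y := algebraMap ℚ (K5 n) (1 / 2)
  set z := algebraMap ℚ (K5 n) (n : ℚ)
  simp only [uK, vK, a5, xi5, hb n]
  linear_combination (2 * y) * hx hn + hy n

lemma L4 (hn : n ≠ 0) :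
    vK n = 1 + algebraMap ℚ (K5 n) ((n : ℚ)⁻¹) - xi5 n * algebraMap ℚ (K5 n) ((n : ℚ)⁻¹) := by
  set x := algebraMap ℚ (K5 n) ((n : ℚ)⁻¹)
  set y := algebraMap ℚ (K5 n) (1 / 2)
  set z := algebraMap ℚ (K5 n) (n : ℚ)
  simp only [uK, vK, a5, xi5, hb n]
  linear_combination (2 * y) * hx hn + (1 + x) * hy n

lemma L5 (hn : n ≠ 0) :
    xi5 n = algebraMap ℚ (K5 n) (n : ℚ) * uK n - algebraMap ℚ (K5 n) (n : ℚ) := by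
  set x := algebraMap ℚ (K5 n) ((n : ℚ)⁻¹)
  set y := algebraMap ℚ (K5 n) (1 / 2)
  set z := algebraMap ℚ (K5 n) (n : ℚ)
  set s := s5 n
  simp only [uK, vK, a5, xi5, hb n]
  linear_combination (-(y * (1 + s + 2 * z))) * hx hn + (-z) * hy n

lemma L6 (hn : n ≠ 0) :
    algebraMap ℚ (K5 n) ((n : ℚ)⁻¹) = uK n + vK n - 2 := by
  set x := algebraMap ℚ (K5 n) ((n : ℚ)⁻¹)
  set y := algebraMap ℚ (K5 n) (1 / 2)
  set z := algebraMap ℚ (K5 n) (n : ℚ)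
  simp only [uK, vK, a5, hb n]
  linear_combination (-(4 * y)) * hx hn + (-(2 + x)) * hy n

lemma L7 (hn : n ≠ 0) : algebraMap ℚ (K5 n) (n : ℚ) * uK n ^ 2 -
    (2 * algebraMap ℚ (K5 n) (n : ℚ) + 1) * uK n + algebraMap ℚ (K5 n) (n : ℚ) = 0 := by
  linear_combination uK n * L2 hn - algebraMap ℚ (K5 n) (n : ℚ) * L1 hn

end Stmt5Aux
namespace Stmt5Aux
open Polynomial LaurentPolynomial
variable {n : ℤ}

lemma mem_x (n : ℤ) : algebraMap ℚ (K5 n) ((n : ℚ)⁻¹) ∈ R5 n :=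
  Subring.subset_closure (Set.mem_insert _ _)

lemma mem_xi (n : ℤ) : xi5 n ∈ R5 n :=
  Subring.subset_closure (Set.mem_insert_of_mem _ rfl)

lemma mem_u (hn : n ≠ 0) : uK n ∈ R5 n := by
  rw [L3 hn]; exact add_mem (mul_mem (mem_xi n) (mem_x n)) (one_mem _)

lemma mem_v (hn : n ≠ 0) : vK n ∈ R5 n := by
  rw [L4 hn]; exact sub_mem (add_mem (one_mem _) (mem_x n)) (mul_mem (mem_xi n) (mem_x n))

noncomputable def U (hn : n ≠ 0) : (R5 n)ˣ where
  val := ⟨uK n, mem_u hn⟩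
  inv := ⟨vK n, mem_v hn⟩
  val_inv := Subtype.ext (L1 hn)
  inv_val := Subtype.ext (by simpa [mul_comm] using L1 hn)

noncomputable def fH (hn : n ≠ 0) : LaurentPolynomial ℤ →+* R5 n :=
  (AddMonoidAlgebra.lift ℤ (R5 n) ℤ
    ((Units.coeHom (R5 n)).comp (zpowersHom (R5 n)ˣ (U hn)))).toRingHom

lemma fT (hn : n ≠ 0) (k : ℤ) : fH hn (T k) = ((U hn ^ k : (R5 n)ˣ) : R5 n) := by
  rw [LaurentPolynomial.T, fH, AlgHom.toRingHom_eq_coe, RingHom.coe_coe,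
    AddMonoidAlgebra.lift_single]
  simp

lemma fC (hn : n ≠ 0) (c : ℤ) : fH hn (LaurentPolynomial.C c) = (c : R5 n) := by
  rw [eq_intCast (LaurentPolynomial.C (R := ℤ)) c]
  exact map_intCast (fH hn) c

lemma fT1K (hn : n ≠ 0) : ((fH hn (T 1) : R5 n) : K5 n) = uK n := by
  rw [fT hn 1, zpow_one]; rfl

lemma fTm1K (hn : n ≠ 0) : ((fH hn (T (-1)) : R5 n) : K5 n) = vK n := by
  rw [fT hn (-1), zpow_neg, zpow_one]; rfl

lemma fDelta (hn : n ≠ 0) : fH hn (DeltaL n) = 0 := by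
  have hT2 : (T 2 : LaurentPolynomial ℤ) = T 1 * T 1 := by
    rw [← LaurentPolynomial.T_add]; norm_num
  have hu := L7 hn
  rw [map_intCast (algebraMap ℚ (K5 n)) n] at hu
  refine Subtype.ext ?_
  rw [DeltaL, hT2]
  simp only [map_sub, map_add, map_mul, fC hn]
  push_cast
  rw [fT1K hn]
  show (n : K5 n) * (uK n * uK n) - (((2:ℤ) : K5 n) * (n : K5 n) + 1) * uK n + (n : K5 n) = 0
  push_cast
  linear_combination hu

end Stmt5Aux
namespace Stmt5Aux
open Polynomial LaurentPolynomial
variable {n : ℤ}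

lemma gC (hn : n ≠ 0) (c : ℤ) :
    ((fH hn (LaurentPolynomial.C c) : R5 n) : K5 n) = (c : K5 n) := by
  rw [fC hn]; push_cast; rfl

lemma surj (hn : n ≠ 0) : Function.Surjective (fH hn) := by
  have hrange : (R5 n : Set (K5 n)) ⊆
      Set.range (fun p : LaurentPolynomial ℤ => ((fH hn p : R5 n) : K5 n)) := by
    have hsub : Subring.closure {algebraMap ℚ (K5 n) ((n : ℚ)⁻¹), xi5 n} ≤
        ((R5 n).subtype.comp (fH hn)).range := by
      apply Subring.closure_le.mpr
      rintro w (rfl | rfl)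
      · refine ⟨T 1 + T (-1) - 2, ?_⟩
        simp only [RingHom.coe_comp, Function.comp_apply, map_sub, map_add, map_ofNat,
          Subring.coe_subtype]
        rw [fT1K hn, fTm1K hn, L6 hn]
      · refine ⟨LaurentPolynomial.C n * T 1 - LaurentPolynomial.C n, ?_⟩
        simp only [RingHom.coe_comp, Function.comp_apply, map_sub, map_mul,
          Subring.coe_subtype]
        rw [fT1K hn]
        rw [show ((fH hn (LaurentPolynomial.C n) : R5 n) : K5 n) = (n : K5 n) from gC hn n]
        have e : ((n : ℤ) : K5 n) = algebraMap ℚ (K5 n) (n : ℚ) := (map_intCast _ n).symm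
        rw [L5 hn, e]
    intro w hw
    obtain ⟨p, hp⟩ := hsub hw
    exact ⟨p, hp⟩
  intro b
  obtain ⟨p, hp⟩ := hrange b.2
  exact ⟨p, Subtype.ext hp⟩

lemma fPoly (hn : n ≠ 0) (P : Polynomial ℤ) :
    ((fH hn P.toLaurent : R5 n) : K5 n) =
      Polynomial.eval₂ (Int.castRingHom (K5 n)) (uK n) P := by
  have hhom : ((R5 n).subtype.comp (fH hn)).comp (Polynomial.toLaurent) =
      Polynomial.eval₂RingHom (Int.castRingHom (K5 n)) (uK n) := by
    apply Polynomial.ringHom_ext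
    · intro a
      simp only [RingHom.coe_comp, Function.comp_apply, Polynomial.toLaurent_C,
        coe_eval₂RingHom, Polynomial.eval₂_C, Subring.coe_subtype]
      rw [show ((fH hn (LaurentPolynomial.C a) : R5 n) : K5 n) = (a : K5 n) from gC hn a]
      rfl
    · simp only [RingHom.coe_comp, Function.comp_apply, Polynomial.toLaurent_X,
        coe_eval₂RingHom, eval₂_X, Subring.coe_subtype]
      exact fT1K hn
  have := RingHom.congr_fun hhom P
  simpa using this

lemma DeltaQ_root (hn : n ≠ 0) : Polynomial.aeval (uK n) (DeltaQ n) = 0 := by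
  rw [DeltaQ]
  simp only [map_add, map_sub, map_mul, map_pow, aeval_C, aeval_X]
  rw [hb n]
  exact L7 hn

lemma DeltaZ_primitive : (DeltaZ n).IsPrimitive := by
  intro r hr
  rw [Polynomial.C_dvd_iff_dvd_coeff] at hr
  have h0 := hr 0
  have h1 := hr 1
  have c0 : (DeltaZ n).coeff 0 = n := by
    simp only [DeltaZ, coeff_add, coeff_sub, coeff_C_mul, coeff_X_pow, coeff_X, coeff_C]
    norm_num
  have c1 : (DeltaZ n).coeff 1 = -(2 * n + 1) := by
    simp only [DeltaZ, coeff_add, coeff_sub, coeff_C_mul, coeff_X_pow, coeff_X, coeff_C]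
    norm_num
  rw [c0] at h0
  rw [c1, dvd_neg] at h1
  have : r ∣ 1 := by
    have h2 : r ∣ 2 * n := h0.mul_left 2
    have h3 : (1 : ℤ) = 2 * n + 1 - 2 * n := by ring
    rw [h3]
    exact dvd_sub h1 h2
  exact isUnit_of_dvd_one this

lemma DeltaZ_map : (DeltaZ n).map (Int.castRingHom ℚ) = DeltaQ n := by
  simp only [DeltaZ, DeltaQ, Polynomial.map_add, Polynomial.map_sub, Polynomial.map_mul,
    Polynomial.map_pow, Polynomial.map_C, Polynomial.map_X, Int.coe_castRingHom]

lemma DeltaZ_toLaurent : (DeltaZ n).toLaurent = DeltaL n := by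
  have h1 : (DeltaZ n) = Polynomial.C n * Polynomial.X ^ 2 -
      Polynomial.C (2 * n + 1) * Polynomial.X ^ 1 + Polynomial.C n * Polynomial.X ^ 0 := by
    rw [DeltaZ]; ring
  rw [h1, map_add, map_sub, Polynomial.toLaurent_C_mul_X_pow, Polynomial.toLaurent_C_mul_X_pow,
    Polynomial.toLaurent_C_mul_X_pow, DeltaL]
  norm_num

lemma K5_nontrivial : Nontrivial (K5 n) := by
  apply AdjoinRoot.nontrivial
  have : ((Polynomial.X : Polynomial ℚ) ^ 2 - Polynomial.C ((4 * n + 1 : ℤ) : ℚ)).degree = 2 := by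
    compute_degree!
  rw [this]
  decide

end Stmt5Aux

open Polynomial LaurentPolynomial Stmt5Aux in
/-- For `n ≠ 0` with `Δₙ` irreducible over `ℚ`, the ring homomorphism
`f : ℤ[t,t⁻¹] → ℤ[1/n, ξ]` determined by `t ↦ a/n` is well-defined, surjective, and
has kernel exactly `(Δₙ)`. -/
theorem stmt5 (n : ℤ) (hn : n ≠ 0) (hirr : Irreducible (DeltaQ n)) :
    ∃ f : LaurentPolynomial ℤ →+* (R5 n),
      ((f (LaurentPolynomial.T 1) : K5 n) = algebraMap ℚ (K5 n) ((n : ℚ)⁻¹) * a5 n) ∧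
      Function.Surjective f ∧
      RingHom.ker f = Ideal.span {DeltaL n} := by
  refine ⟨fH hn, ?_, surj hn, ?_⟩
  · rw [fT1K hn]; rfl
  · apply le_antisymm
    · intro p hp
      rw [RingHom.mem_ker] at hp
      obtain ⟨m, P, hP⟩ := p.exists_T_pow
      have hpT : p = P.toLaurent * T (-(m : ℤ)) := by
        rw [hP, mul_assoc, ← T_add, add_neg_cancel, T_zero, mul_one]
      have hPeval : Polynomial.eval₂ (Int.castRingHom (K5 n)) (uK n) P = 0 := by
        rw [← fPoly hn, hP, map_mul, hp, zero_mul, ZeroMemClass.coe_zero]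
      by_cases hP0 : P = 0
      · have hp0 : p = 0 := by rw [hpT, hP0, map_zero, zero_mul]
        rw [hp0]; exact Ideal.zero_mem _
      · -- divisibility over ℚ
        have hcast : (algebraMap ℚ (K5 n)).comp (Int.castRingHom ℚ) = Int.castRingHom (K5 n) :=
          Subsingleton.elim _ _
        have hPq : Polynomial.aeval (uK n) (P.map (Int.castRingHom ℚ)) = 0 := by
          rw [Polynomial.aeval_def, Polynomial.eval₂_map, hcast]
          exact hPeval
        have hQ : DeltaQ n ∣ P.map (Int.castRingHom ℚ) := by
          by_contra hnd
          obtain ⟨A, B, hAB⟩ := (hirr.coprime_iff_not_dvd).mpr hnd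
          haveI : Nontrivial (K5 n) := K5_nontrivial
          have hz := congrArg (Polynomial.aeval (uK n)) hAB
          rw [map_add, map_mul, map_mul, DeltaQ_root hn, hPq, mul_zero, mul_zero,
            add_zero, map_one] at hz
          exact one_ne_zero hz.symm
        have h1 : DeltaQ n ∣ (P.primPart).map (Int.castRingHom ℚ) := by
          have hcont : ((P.content : ℤ) : ℚ) ≠ 0 :=
            Int.cast_ne_zero.mpr (fun h => hP0 (Polynomial.content_eq_zero_iff.mp h))
          have hdec : P.map (Int.castRingHom ℚ) =
              Polynomial.C ((P.content : ℤ) : ℚ) * (P.primPart.map (Int.castRingHom ℚ)) := by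
            conv_lhs => rw [P.eq_C_content_mul_primPart]
            rw [Polynomial.map_mul, Polynomial.map_C, Int.coe_castRingHom]
          rw [hdec, (Polynomial.isUnit_C.mpr (isUnit_iff_ne_zero.mpr hcont)).dvd_mul_left] at hQ
          exact hQ
        have h2 : DeltaZ n ∣ P.primPart := by
          apply (DeltaZ_primitive (n := n)).dvd_of_fraction_map_dvd_fraction_map (K := ℚ)
          rw [show algebraMap ℤ ℚ = Int.castRingHom ℚ from algebraMap_int_eq ℚ, DeltaZ_map]
          exact h1
        obtain ⟨r, hr⟩ := h2.trans P.primPart_dvd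
        rw [Ideal.mem_span_singleton]
        exact ⟨r.toLaurent * T (-(m : ℤ)), by rw [hpT, hr, map_mul, DeltaZ_toLaurent, mul_assoc]⟩
    · rw [Ideal.span_le]
      intro x hx
      rw [Set.mem_singleton_iff] at hx
      subst hx
      simp only [SetLike.mem_coe, RingHom.mem_ker]
      exact fDelta hn
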